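/- arXiv:2307.09687 — 3 statements merged into one kernel-verified Lean document; each statement's English description precedes it below -/
import Mathlib

section
/- Let A, B be real constants with 0 < A < B and let W be the Flory–Huggins potential. Then for all x, y in the open interval (−1,1), the Taylor-type inequality W'(x)·(x − y) ≥ W(x) − W(y) − ((B−A)/2)·(x − y)² holds. -/
open Real Set

private lemma fh_hasDerivAt (A : ℝ) {x : ℝ} (hx : x ∈ Set.Ioo (-1 : ℝ) 1) :
    HasDerivAt (fun r : ℝ => A / 2 * ((1 + r) * Real.log (1 + r) + (1 - r) * Real.log (1 - r))
        - A / 2 * r ^ 2)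
      (A / 2 * (Real.log (1 + x) - Real.log (1 - x)) - A * x) x := by
  have h1 : (0:ℝ) < 1 + x := by linarith [hx.1]
  have h2 : (0:ℝ) < 1 - x := by linarith [hx.2]
  have d1 : HasDerivAt (fun r : ℝ => 1 + r) 1 x := by
    simpa using (hasDerivAt_id x).const_add 1
  have d2 : HasDerivAt (fun r : ℝ => 1 - r) (-1) x := by
    exact (hasDerivAt_id' x).const_sub 1
  have l1 : HasDerivAt (fun r : ℝ => Real.log (1 + r)) (1 / (1 + x)) x := d1.log h1.ne'
  have l2 : HasDerivAt (fun r : ℝ => Real.log (1 - r)) ((-1) / (1 - x)) x := d2.log h2.ne'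
  have m1 : HasDerivAt (fun r : ℝ => (1 + r) * Real.log (1 + r))
      (1 * Real.log (1 + x) + (1 + x) * (1 / (1 + x))) x := d1.mul l1
  have m2 : HasDerivAt (fun r : ℝ => (1 - r) * Real.log (1 - r))
      ((-1) * Real.log (1 - x) + (1 - x) * ((-1) / (1 - x))) x := d2.mul l2
  have sq : HasDerivAt (fun r : ℝ => A / 2 * r ^ 2) (A / 2 * (2 * x)) x := by
    simpa using ((hasDerivAt_pow 2 x).const_mul (A / 2))
  have := ((m1.add m2).const_mul (A / 2)).sub sq
  refine this.congr_deriv ?_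
  field_simp [h1.ne', h2.ne']
  ring

private lemma fh_hasDerivAt2 (A : ℝ) {x : ℝ} (hx : x ∈ Set.Ioo (-1 : ℝ) 1) :
    HasDerivAt (fun r : ℝ => A / 2 * (Real.log (1 + r) - Real.log (1 - r)) - A * r)
      (A * x ^ 2 / (1 - x ^ 2)) x := by
  have h1 : (0:ℝ) < 1 + x := by linarith [hx.1]
  have h2 : (0:ℝ) < 1 - x := by linarith [hx.2]
  have d1 : HasDerivAt (fun r : ℝ => 1 + r) 1 x := by
    simpa using (hasDerivAt_id x).const_add 1
  have d2 : HasDerivAt (fun r : ℝ => 1 - r) (-1) x := by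
    exact (hasDerivAt_id' x).const_sub 1
  have l1 : HasDerivAt (fun r : ℝ => Real.log (1 + r)) (1 / (1 + x)) x := d1.log h1.ne'
  have l2 : HasDerivAt (fun r : ℝ => Real.log (1 - r)) ((-1) / (1 - x)) x := d2.log h2.ne'
  have lin : HasDerivAt (fun r : ℝ => A * r) A x := by
    simpa using (hasDerivAt_id x).const_mul A
  have := (((l1.sub l2).const_mul (A / 2)).sub lin)
  refine this.congr_deriv ?_
  have hne : (1 : ℝ) - x ^ 2 ≠ 0 := by nlinarith
  field_simp [h1.ne', h2.ne']
  ring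

/-- Taylor-type inequality for the Flory–Huggins potential with `0 < A < B`:
`W'(x)·(x - y) ≥ W(x) - W(y) - ((B-A)/2)·(x-y)²` for all `x, y ∈ (-1,1)`. -/
theorem floryHuggins_taylor_inequality (A B : ℝ) (hA : 0 < A) (hAB : A < B)
    (W W' : ℝ → ℝ)
    (hW : ∀ r, W r = A / 2 * ((1 + r) * Real.log (1 + r) + (1 - r) * Real.log (1 - r))
        - B / 2 * r ^ 2)
    (hW' : ∀ r, W' r = A / 2 * Real.log ((1 + r) / (1 - r)) - B * r) :
    ∀ x ∈ Set.Ioo (-1 : ℝ) 1, ∀ y ∈ Set.Ioo (-1 : ℝ) 1,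
      W' x * (x - y) ≥ W x - W y - (B - A) / 2 * (x - y) ^ 2 := by
  set H : ℝ → ℝ := fun r => A / 2 * ((1 + r) * Real.log (1 + r) + (1 - r) * Real.log (1 - r))
      - A / 2 * r ^ 2 with hH
  set H' : ℝ → ℝ := fun r => A / 2 * (Real.log (1 + r) - Real.log (1 - r)) - A * r with hH'
  have hconv : ConvexOn ℝ (Set.Ioo (-1 : ℝ) 1) H := by
    apply convexOn_of_hasDerivWithinAt2_nonneg (f' := H') (f'' := fun x => A * x ^ 2 / (1 - x ^ 2))
      (convex_Ioo _ _)
    · exact fun x hx => ((fh_hasDerivAt A hx).continuousAt).continuousWithinAt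
    · intro x hx
      rw [interior_Ioo] at hx
      exact (fh_hasDerivAt A hx).hasDerivWithinAt
    · intro x hx
      rw [interior_Ioo] at hx
      exact (fh_hasDerivAt2 A hx).hasDerivWithinAt
    · intro x hx
      rw [interior_Ioo] at hx
      have : (0:ℝ) < 1 - x ^ 2 := by nlinarith [hx.1, hx.2]
      positivity
  intro x hx y hy
  have h1 : (0:ℝ) < 1 + x := by linarith [hx.1]
  have h2 : (0:ℝ) < 1 - x := by linarith [hx.2]
  have key : H x - H y ≤ H' x * (x - y) := by
    rcases lt_trichotomy x y with h | h | h
    · have hs := hconv.le_slope_of_hasDerivAt hx hy h (fh_hasDerivAt A hx)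
      rw [slope_def_field] at hs
      have hc : (0:ℝ) < y - x := by linarith
      have h3 := (le_div_iff₀ hc).mp hs
      have e : H' x * (x - y)
          = -((A / 2 * (Real.log (1 + x) - Real.log (1 - x)) - A * x) * (y - x)) := by
        simp only [hH']; ring
      rw [e]; linarith
    · simp [h]
    · have hs := hconv.slope_le_of_hasDerivAt hy hx h (fh_hasDerivAt A hx)
      rw [slope_def_field] at hs
      have hc : (0:ℝ) < x - y := by linarith
      have h3 := (div_le_iff₀ hc).mp hs
      have e : H' x * (x - y)
          = (A / 2 * (Real.log (1 + x) - Real.log (1 - x)) - A * x) * (x - y) := by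
        simp only [hH']
      rw [e]; linarith
  have hlog : Real.log ((1 + x) / (1 - x)) = Real.log (1 + x) - Real.log (1 - x) :=
    Real.log_div h1.ne' h2.ne'
  rw [hW x, hW y, hW' x, hlog]
  simp only [hH, hH'] at key
  nlinarith [key]
end

section
/- Let A, B be real constants with 0 < A < B and let W be the Flory–Huggins potential. Let n ≥ 1, let Ω ⊂ ℝⁿ be a bounded measurable set of positive Lebesgue measure |Ω|, and let φ : Ω → ℝ be measurable with φ(x) ∈ (−1,1) for almost every x ∈ Ω, such that the function x ↦ W'(φ(x)) is integrable on Ω. Let φ̄ = (1/|Ω|)·∫_Ω φ dx and assume φ̄ ∈ (−1,1). Then ∫_Ω W'(φ(x))·(φ(x) − φ̄) dx ≥ ∫_Ω W(φ(x)) dx − |Ω|·W(φ̄) − ((B−A)/2)·∫_Ω (φ(x) − φ̄)² dx. -/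
open Real Set MeasureTheory

private lemma fh_hasDerivAt_G {t : ℝ} (h1 : 0 < 1 + t) (h2 : 0 < 1 - t) :
    HasDerivAt (fun u : ℝ => (1+u)*Real.log (1+u) + (1-u)*Real.log (1-u) - u^2)
      (Real.log (1+t) - Real.log (1-t) - 2*t) t := by
  have hA : HasDerivAt (fun u : ℝ => 1 + u) 1 t := by
    simpa using (hasDerivAt_id t).const_add (1 : ℝ)
  have hB : HasDerivAt (fun u : ℝ => 1 - u) (-1) t := by
    simpa using (hasDerivAt_id t).const_sub (1 : ℝ)
  have hlog1 := hA.log h1.ne'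
  have hlog2 := hB.log h2.ne'
  have h := ((hA.mul hlog1).add (hB.mul hlog2)).sub (hasDerivAt_pow 2 t)
  refine h.congr_deriv ?_
  field_simp
  ring

private lemma fh_hasDerivAt_G' {t : ℝ} (h1 : 0 < 1 + t) (h2 : 0 < 1 - t) :
    HasDerivAt (fun u : ℝ => Real.log (1+u) - Real.log (1-u) - 2*u)
      (1/(1+t) + 1/(1-t) - 2) t := by
  have hA : HasDerivAt (fun u : ℝ => 1 + u) 1 t := by
    simpa using (hasDerivAt_id t).const_add (1 : ℝ)
  have hB : HasDerivAt (fun u : ℝ => 1 - u) (-1) t := by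
    simpa using (hasDerivAt_id t).const_sub (1 : ℝ)
  have hlog1 := hA.log h1.ne'
  have hlog2 := hB.log h2.ne'
  have h := (hlog1.sub hlog2).sub ((hasDerivAt_id t).const_mul (2 : ℝ))
  refine h.congr_deriv ?_
  field_simp
  ring

private lemma fh_convexG :
    ConvexOn ℝ (Set.Ioo (-1:ℝ) 1)
      (fun u : ℝ => (1+u)*Real.log (1+u) + (1-u)*Real.log (1-u) - u^2) := by
  apply convexOn_of_hasDerivWithinAt2_nonneg (convex_Ioo _ _)
    (f' := fun u : ℝ => Real.log (1+u) - Real.log (1-u) - 2*u)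
    (f'' := fun u : ℝ => 1/(1+u) + 1/(1-u) - 2)
  · intro x hx
    have h1 : 0 < 1 + x := by linarith [hx.1]
    have h2 : 0 < 1 - x := by linarith [hx.2]
    exact (fh_hasDerivAt_G h1 h2).continuousAt.continuousWithinAt
  · rw [interior_Ioo]
    intro x hx
    have h1 : 0 < 1 + x := by linarith [hx.1]
    have h2 : 0 < 1 - x := by linarith [hx.2]
    exact (fh_hasDerivAt_G h1 h2).hasDerivWithinAt
  · rw [interior_Ioo]
    intro x hx
    have h1 : 0 < 1 + x := by linarith [hx.1]
    have h2 : 0 < 1 - x := by linarith [hx.2]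
    exact (fh_hasDerivAt_G' h1 h2).hasDerivWithinAt
  · rw [interior_Ioo]
    intro x hx
    have h1 : 0 < 1 + x := by linarith [hx.1]
    have h2 : 0 < 1 - x := by linarith [hx.2]
    have key : 1/(1+x) + 1/(1-x) - 2 = 2*x^2/((1+x)*(1-x)) := by
      field_simp; ring
    rw [key]
    positivity

private lemma fh_tangent {r s : ℝ} (hr : r ∈ Set.Ioo (-1:ℝ) 1) (hs : s ∈ Set.Ioo (-1:ℝ) 1) :
    (1+r)*Real.log (1+r) + (1-r)*Real.log (1-r) - r^2
      + (Real.log (1+r) - Real.log (1-r) - 2*r) * (s - r)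
      ≤ (1+s)*Real.log (1+s) + (1-s)*Real.log (1-s) - s^2 := by
  have h1 : 0 < 1 + r := by linarith [hr.1]
  have h2 : 0 < 1 - r := by linarith [hr.2]
  have hd : HasDerivAt (fun u : ℝ => (1+u)*Real.log (1+u) + (1-u)*Real.log (1-u) - u^2)
      (Real.log (1+r) - Real.log (1-r) - 2*r) r := fh_hasDerivAt_G h1 h2
  rcases lt_trichotomy r s with h | h | h
  · have hsl := fh_convexG.le_slope_of_hasDerivAt hr hs h hd
    rw [slope_def_field] at hsl
    have hpos : 0 < s - r := by linarith
    have := (le_div_iff₀ hpos).mp hsl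
    linarith
  · subst h; simp
  · have hsl := fh_convexG.slope_le_of_hasDerivAt hs hr h hd
    rw [slope_def_field] at hsl
    have hpos : 0 < r - s := by linarith
    have h' := (div_le_iff₀ hpos).mp hsl
    nlinarith [h']

private lemma fh_pointwise (A B : ℝ) (hA : 0 < A) {r s : ℝ}
    (hr : r ∈ Set.Ioo (-1:ℝ) 1) (hs : s ∈ Set.Ioo (-1:ℝ) 1) :
    (A / 2 * Real.log ((1+r)/(1-r)) - B * r) * (r - s) ≥
      (A / 2 * ((1+r)*Real.log (1+r) + (1-r)*Real.log (1-r)) - B/2*r^2)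
      - (A / 2 * ((1+s)*Real.log (1+s) + (1-s)*Real.log (1-s)) - B/2*s^2)
      - (B - A)/2 * (r - s)^2 := by
  have h1 : 0 < 1 + r := by linarith [hr.1]
  have h2 : 0 < 1 - r := by linarith [hr.2]
  rw [Real.log_div h1.ne' h2.ne']
  have tan := fh_tangent hr hs
  nlinarith [mul_le_mul_of_nonneg_left tan (by linarith : (0:ℝ) ≤ A/2)]

private lemma fh_mul_log_bound {t : ℝ} (ht : 0 < t) (ht2 : t ≤ 2) : |t * Real.log t| ≤ 2 := by
  rcases le_or_gt t 1 with h | h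
  · have hlog : Real.log t ≤ 0 := Real.log_nonpos ht.le h
    have h' : Real.log t⁻¹ ≤ t⁻¹ - 1 := Real.log_le_sub_one_of_pos (by positivity)
    rw [Real.log_inv] at h'
    have hm : t * (-Real.log t) ≤ t * (t⁻¹ - 1) := mul_le_mul_of_nonneg_left h' ht.le
    have h'' : t * (t⁻¹ - 1) = 1 - t := by field_simp
    rw [abs_of_nonpos (mul_nonpos_of_nonneg_of_nonpos ht.le hlog)]
    nlinarith
  · have hlog : Real.log t ≤ t - 1 := Real.log_le_sub_one_of_pos ht
    have hlog0 : 0 ≤ Real.log t := Real.log_nonneg h.le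
    rw [abs_of_nonneg (by positivity)]
    nlinarith [mul_le_mul_of_nonneg_left hlog ht.le]

/-- Integrated Taylor-type inequality for the Flory–Huggins potential: for a measurable
`φ` with values a.e. in `(-1,1)` on a bounded measurable set `Ω ⊂ ℝⁿ` of positive
measure, with `W'(φ)` integrable and mean value `φ̄ ∈ (-1,1)`, one has
`∫ W'(φ)(φ - φ̄) ≥ ∫ W(φ) - |Ω|·W(φ̄) - ((B-A)/2)·∫ (φ - φ̄)²`. -/
theorem floryHuggins_integrated_taylor (A B : ℝ) (hA : 0 < A) (hAB : A < B)
    (W W' : ℝ → ℝ)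
    (hW : ∀ r, W r = A / 2 * ((1 + r) * Real.log (1 + r) + (1 - r) * Real.log (1 - r))
        - B / 2 * r ^ 2)
    (hW' : ∀ r, W' r = A / 2 * Real.log ((1 + r) / (1 - r)) - B * r)
    (n : ℕ) (hn : 1 ≤ n)
    (Ω : Set (EuclideanSpace ℝ (Fin n)))
    (hΩmeas : MeasurableSet Ω) (hΩbdd : Bornology.IsBounded Ω)
    (hΩpos : 0 < volume Ω)
    (φ : EuclideanSpace ℝ (Fin n) → ℝ) (hφmeas : Measurable φ)
    (hφrange : ∀ᵐ x ∂(volume.restrict Ω), φ x ∈ Set.Ioo (-1 : ℝ) 1)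
    (hWint : IntegrableOn (fun x => W' (φ x)) Ω)
    (φbar : ℝ) (hφbar : φbar = (∫ x in Ω, φ x) / (volume Ω).toReal)
    (hφbarIoo : φbar ∈ Set.Ioo (-1 : ℝ) 1) :
    ∫ x in Ω, W' (φ x) * (φ x - φbar) ≥
      (∫ x in Ω, W (φ x)) - (volume Ω).toReal * W φbar
        - (B - A) / 2 * ∫ x in Ω, (φ x - φbar) ^ 2 := by
  have hμfin : volume Ω < ⊤ := hΩbdd.measure_lt_top
  have hconst : ∀ c : ℝ, IntegrableOn (fun _ => c) Ω (volume) :=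
    fun c => integrableOn_const hμfin.ne
  -- integrability of (φ - φbar)^2
  have hsqint : IntegrableOn (fun x => (φ x - φbar) ^ 2) Ω := by
    apply Integrable.mono' (hconst 4)
      ((hφmeas.sub measurable_const).pow_const 2).aestronglyMeasurable
    filter_upwards [hφrange] with x hx
    rw [Real.norm_eq_abs, abs_of_nonneg (sq_nonneg _)]
    show (φ x - φbar) ^ 2 ≤ 4
    nlinarith [hx.1, hx.2, hφbarIoo.1, hφbarIoo.2]
  -- integrability of W ∘ φ
  have hWmeas : Measurable W := by
    have : W = fun r => A / 2 * ((1 + r) * Real.log (1 + r) + (1 - r) * Real.log (1 - r))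
        - B / 2 * r ^ 2 := funext hW
    rw [this]
    fun_prop
  have hWφint : IntegrableOn (fun x => W (φ x)) Ω := by
    apply Integrable.mono' (hconst (2*A + B/2))
      ((hWmeas.comp hφmeas : Measurable fun x => W (φ x))).aestronglyMeasurable
    filter_upwards [hφrange] with x hx
    simp only [Function.comp_apply]
    have h1 : 0 < 1 + φ x := by linarith [hx.1]
    have h2 : 0 < 1 - φ x := by linarith [hx.2]
    have b1 := fh_mul_log_bound h1 (by linarith [hx.2])
    have b2 := fh_mul_log_bound h2 (by linarith [hx.1])
    rw [Real.norm_eq_abs, hW]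
    have hsq : |φ x| ≤ 1 := abs_le.2 ⟨hx.1.le, hx.2.le⟩
    have habs1 := abs_le.1 b1
    have habs2 := abs_le.1 b2
    have hsq2 : (φ x)^2 ≤ 1 := by nlinarith [hx.1, hx.2]
    rw [abs_le]
    constructor <;> nlinarith [sq_nonneg (φ x)]
  -- integrability of W'(φ) * (φ - φbar)
  have hW'mulint : IntegrableOn (fun x => W' (φ x) * (φ x - φbar)) Ω := by
    have h : IntegrableOn (fun x => (φ x - φbar) * W' (φ x)) Ω := by
      apply Integrable.bdd_mul (c := 2) hWint
        (hφmeas.sub measurable_const).aestronglyMeasurable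
      filter_upwards [hφrange] with x hx
      rw [Real.norm_eq_abs, abs_le]
      show -2 ≤ φ x - φbar ∧ φ x - φbar ≤ 2
      constructor <;> [nlinarith [hx.1, hφbarIoo.2]; nlinarith [hx.2, hφbarIoo.1]]
    exact h.congr_fun (fun x _ => mul_comm _ _) hΩmeas
  -- pointwise inequality a.e.
  have hae : ∀ᵐ x ∂(volume.restrict Ω),
      0 ≤ W' (φ x) * (φ x - φbar)
        - (W (φ x) - W φbar - (B - A)/2 * (φ x - φbar)^2) := by
    filter_upwards [hφrange] with x hx
    have := fh_pointwise A B hA hx hφbarIoo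
    rw [hW', hW, hW]
    linarith [this]
  have h0 : 0 ≤ ∫ x in Ω, (W' (φ x) * (φ x - φbar)
      - (W (φ x) - W φbar - (B - A)/2 * (φ x - φbar)^2)) :=
    integral_nonneg_of_ae hae
  have hinner : IntegrableOn
      (fun x => W (φ x) - W φbar - (B - A)/2 * (φ x - φbar)^2) Ω :=
    (hWφint.sub (hconst (W φbar))).sub (hsqint.const_mul _)
  have hd1 : IntegrableOn (fun x => W (φ x) - W φbar) Ω :=
    hWφint.sub (hconst _)
  have e2 : ∫ x in Ω, (W (φ x) - W φbar - (B - A)/2 * (φ x - φbar)^2)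
      = (∫ x in Ω, W (φ x)) - (volume Ω).toReal * W φbar
        - (B - A)/2 * ∫ x in Ω, (φ x - φbar)^2 := by
    rw [integral_sub hd1 (hsqint.const_mul ((B - A)/2)),
      integral_sub hWφint (hconst (W φbar)), setIntegral_const,
      integral_const_mul, smul_eq_mul]
    rfl
  rw [integral_sub hW'mulint hinner, e2] at h0
  linarith [h0]
end

section
/- Let n ≥ 1 and let u : ℝⁿ → ℝⁿ be a continuously differentiable map with compact support, with components u₁, …, uₙ and partial derivatives ∂ᵢuⱼ. Then the Korn identity 2·∫_{ℝⁿ} Σᵢⱼ (½·(∂ᵢuⱼ(x) + ∂ⱼuᵢ(x)))² dx = ∫_{ℝⁿ} Σᵢⱼ (∂ᵢuⱼ(x))² dx + ∫_{ℝⁿ} (Σᵢ ∂ᵢuᵢ(x))² dx holds. In particular, if the divergence Σᵢ ∂ᵢuᵢ vanishes identically, then ∫_{ℝⁿ} Σᵢⱼ (∂ᵢuⱼ)² dx = 2·∫_{ℝⁿ} Σᵢⱼ (½·(∂ᵢuⱼ + ∂ⱼuᵢ))² dx, i.e., the L²-norm of the full gradient equals √2 times the L²-norm of the symmetric gradient D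 u = ½·(∇u + (∇u)ᵀ). -/
open Real Set MeasureTheory Filter Convolution ContinuousLinearMap Metric Topology

variable {n : ℕ}

/-- Integration by parts twice: swap the two directions, C² case for `g`. -/
lemma korn_swap_smooth {f g : (Fin n → ℝ) → ℝ}
    (hf : ContDiff ℝ 1 f) (hfs : HasCompactSupport f)
    (hg : ContDiff ℝ 2 g) (hgs : HasCompactSupport g) (v w : Fin n → ℝ) :
    ∫ x, fderiv ℝ f x v * fderiv ℝ g x w = ∫ x, fderiv ℝ f x w * fderiv ℝ g x v := by
  have hfd : Differentiable ℝ f := hf.differentiable (by norm_num)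
  have hgd : Differentiable ℝ g := hg.differentiable (by norm_num)
  have hg1 : ContDiff ℝ 1 (fderiv ℝ g) := hg.fderiv_right (by norm_num)
  have hg1d : Differentiable ℝ (fderiv ℝ g) := hg1.differentiable (by norm_num)
  set H : (Fin n → ℝ) → (Fin n → ℝ) →L[ℝ] (Fin n → ℝ) →L[ℝ] ℝ := fderiv ℝ (fderiv ℝ g) with hH
  have hsymm : ∀ x a b, H x a b = H x b a := fun x a b =>
    second_derivative_symmetric (fun y => (hgd y).hasFDerivAt) ((hg1d x).hasFDerivAt) a b
  -- derivative of directional derivative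
  have hdir : ∀ (a : Fin n → ℝ), Differentiable ℝ (fun x => fderiv ℝ g x a) :=
    fun a x => (hg1d x).clm_apply (differentiableAt_const a)
  have hdirf : ∀ (a b : Fin n → ℝ) (x), fderiv ℝ (fun x => fderiv ℝ g x a) x b = H x b a := by
    intro a b x
    rw [fderiv_clm_apply (hg1d x) (differentiableAt_const a)]
    simp [hH]
  -- continuity facts
  have cf' : Continuous fun x => fderiv ℝ f x := hf.continuous_fderiv (by norm_num)
  have cg' : Continuous fun x => fderiv ℝ g x := hg.continuous_fderiv (by norm_num)
  have cH : Continuous H := hg1.continuous_fderiv (by norm_num)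
  have cfv : ∀ a, Continuous fun x => fderiv ℝ f x a :=
    fun a => cf'.clm_apply continuous_const
  have cgv : ∀ a, Continuous fun x => fderiv ℝ g x a :=
    fun a => cg'.clm_apply continuous_const
  have cHab : ∀ a b, Continuous fun x => H x a b :=
    fun a b => (cH.clm_apply continuous_const).clm_apply continuous_const
  have hfs' : ∀ a, HasCompactSupport fun x => fderiv ℝ f x a :=
    fun a => (hfs.fderiv ℝ).comp_left (g := fun (L : (Fin n → ℝ) →L[ℝ] ℝ) => L a) rfl
  -- integrability
  have int1 : ∀ a b, Integrable (fun x => fderiv ℝ g x a * fderiv ℝ f x b) :=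
    fun a b => ((cgv a).mul (cfv b)).integrable_of_hasCompactSupport ((hfs' b).mul_left)
  have int2 : ∀ a b, Integrable (fun x => H x a b * f x) := fun a b =>
    ((cHab a b).mul hf.continuous).integrable_of_hasCompactSupport hfs.mul_left
  have int3 : ∀ a, Integrable (fun x => fderiv ℝ g x a * f x) := fun a =>
    ((cgv a).mul hf.continuous).integrable_of_hasCompactSupport hfs.mul_left
  -- integration by parts, direction v, functions (∂_w g) and f
  have A1 : ∫ x, (fun x => fderiv ℝ g x w) x * fderiv ℝ f x v
      = -∫ x, fderiv ℝ (fun x => fderiv ℝ g x w) x v * f x := by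
    refine integral_mul_fderiv_eq_neg_fderiv_mul_of_integrable ?_ ?_ ?_ (fun x _ => hdir w x) (fun x _ => hfd x)
    · simp_rw [hdirf w v]; exact int2 v w
    · exact int1 w v
    · exact int3 w
  have A2 : ∫ x, (fun x => fderiv ℝ g x v) x * fderiv ℝ f x w
      = -∫ x, fderiv ℝ (fun x => fderiv ℝ g x v) x w * f x := by
    refine integral_mul_fderiv_eq_neg_fderiv_mul_of_integrable ?_ ?_ ?_ (fun x _ => hdir v x) (fun x _ => hfd x)
    · simp_rw [hdirf v w]; exact int2 w v
    · exact int1 v w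
    · exact int3 v
  simp only [hdirf] at A1 A2
  calc ∫ x, fderiv ℝ f x v * fderiv ℝ g x w
      = ∫ x, fderiv ℝ g x w * fderiv ℝ f x v := by simp_rw [mul_comm]
    _ = -∫ x, H x v w * f x := A1
    _ = -∫ x, H x w v * f x := by simp_rw [hsymm _ v w]
    _ = ∫ x, fderiv ℝ g x v * fderiv ℝ f x w := A2.symm
    _ = ∫ x, fderiv ℝ f x w * fderiv ℝ g x v := by simp_rw [mul_comm]

/-- The directions swap identity in the `C¹` case, by mollifying `g`. -/
lemma korn_swap {f g : (Fin n → ℝ) → ℝ}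
    (hf : ContDiff ℝ 1 f) (hfs : HasCompactSupport f)
    (hg : ContDiff ℝ 1 g) (hgs : HasCompactSupport g) (v w : Fin n → ℝ) :
    ∫ x, fderiv ℝ f x v * fderiv ℝ g x w = ∫ x, fderiv ℝ f x w * fderiv ℝ g x v := by
  -- a sequence of bump functions
  set φ : ℕ → ContDiffBump (0 : Fin n → ℝ) := fun k =>
    { rIn := ((k : ℝ) + 1)⁻¹
      rOut := 2 * ((k : ℝ) + 1)⁻¹
      rIn_pos := by positivity
      rIn_lt_rOut := by
        have : (0:ℝ) < ((k : ℝ) + 1)⁻¹ := by positivity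
        linarith } with hφdef
  have hφ0 : Tendsto (fun k => (φ k).rOut) atTop (𝓝 0) := by
    have h := tendsto_one_div_add_atTop_nhds_zero_nat.const_mul (2 : ℝ)
    simpa [hφdef, one_div, mul_comm] using h
  set gk : ℕ → (Fin n → ℝ) → ℝ := fun k =>
    (φ k).normed volume ⋆[lsmul ℝ ℝ, volume] g with hgk
  have hgloc : MeasureTheory.LocallyIntegrable g volume := hg.continuous.locallyIntegrable
  have hgk_smooth : ∀ k, ContDiff ℝ 2 (gk k) := fun k =>
    HasCompactSupport.contDiff_convolution_left _ (φ k).hasCompactSupport_normed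
      ((φ k).contDiff_normed) hgloc
  have hgk_supp : ∀ k, HasCompactSupport (gk k) := fun k =>
    ((φ k).hasCompactSupport_normed).convolution _ hgs
  have hbumploc : ∀ k, MeasureTheory.LocallyIntegrable ((φ k).normed volume) volume :=
    fun k => ((φ k).integrable_normed).locallyIntegrable
  have hder : ∀ k x, HasFDerivAt (gk k)
      ((((φ k).normed volume) ⋆[(lsmul ℝ ℝ).precompR (Fin n → ℝ), volume] fderiv ℝ g) x) x :=
    fun k x => HasCompactSupport.hasFDerivAt_convolution_right _ hgs (hbumploc k) hg x
  have hcomp : ∀ k x (a : Fin n → ℝ), fderiv ℝ (gk k) x a =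
      (((φ k).normed volume) ⋆[lsmul ℝ ℝ, volume] (fun t => fderiv ℝ g t a)) x := by
    intro k x a
    rw [(hder k x).fderiv]
    exact convolution_precompR_apply _ (hbumploc k) (hgs.fderiv ℝ)
      (hg.continuous_fderiv (by norm_num)) x a
  have cg' : Continuous (fderiv ℝ g) := hg.continuous_fderiv (by norm_num)
  have htend : ∀ (a : Fin n → ℝ) x, Tendsto (fun k => fderiv ℝ (gk k) x a) atTop
      (𝓝 (fderiv ℝ g x a)) := by
    intro a x
    simp_rw [hcomp]
    exact ContDiffBump.convolution_tendsto_right_of_continuous hφ0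
      (cg'.clm_apply continuous_const) x
  -- uniform bound
  obtain ⟨M, hM⟩ : ∃ M : ℝ, ∀ x, ‖fderiv ℝ g x‖ ≤ M := by
    obtain ⟨M, hM⟩ := (cg'.norm).bddAbove_range_of_hasCompactSupport (hgs.fderiv ℝ).norm
    exact ⟨M, fun x => hM ⟨x, rfl⟩⟩
  have hMa : ∀ (a : Fin n → ℝ) x, ‖fderiv ℝ g x a‖ ≤ M * ‖a‖ := fun a x =>
    le_trans ((fderiv ℝ g x).le_opNorm a)
      (mul_le_mul_of_nonneg_right (hM x) (norm_nonneg a))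
  have hbound : ∀ k x (a : Fin n → ℝ), ‖fderiv ℝ (gk k) x a‖ ≤ 3 * (M * ‖a‖) := by
    intro k x a
    rw [hcomp]
    have h1 : dist ((((φ k).normed volume) ⋆[lsmul ℝ ℝ, volume]
        (fun t => fderiv ℝ g t a)) x) (fderiv ℝ g x a) ≤ 2 * (M * ‖a‖) := by
      apply ContDiffBump.dist_normed_convolution_le
        (cg'.clm_apply continuous_const).aestronglyMeasurable
      intro y _
      calc dist (fderiv ℝ g y a) (fderiv ℝ g x a) ≤ ‖fderiv ℝ g y a‖ + ‖fderiv ℝ g x a‖ :=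
            dist_le_norm_add_norm _ _
        _ ≤ 2 * (M * ‖a‖) := by have := hMa a y; have := hMa a x; linarith
    rw [dist_eq_norm] at h1
    have h3 := hMa a x
    calc ‖(((φ k).normed volume) ⋆[lsmul ℝ ℝ, volume] (fun t => fderiv ℝ g t a)) x‖
        = ‖((((φ k).normed volume) ⋆[lsmul ℝ ℝ, volume] (fun t => fderiv ℝ g t a)) x
            - fderiv ℝ g x a) + fderiv ℝ g x a‖ := by rw [sub_add_cancel]
      _ ≤ ‖(((φ k).normed volume) ⋆[lsmul ℝ ℝ, volume] (fun t => fderiv ℝ g t a)) x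
            - fderiv ℝ g x a‖ + ‖fderiv ℝ g x a‖ := norm_add_le _ _
      _ ≤ 3 * (M * ‖a‖) := by linarith
  -- continuity of everything
  have cf' : Continuous (fderiv ℝ f) := hf.continuous_fderiv (by norm_num)
  have cfa : ∀ (a : Fin n → ℝ), Continuous fun x => fderiv ℝ f x a :=
    fun a => cf'.clm_apply continuous_const
  have hfs' : ∀ (a : Fin n → ℝ), HasCompactSupport fun x => fderiv ℝ f x a :=
    fun a => (hfs.fderiv ℝ).comp_left (g := fun (L : (Fin n → ℝ) →L[ℝ] ℝ) => L a) rfl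
  have cgka : ∀ k (a : Fin n → ℝ), Continuous fun x => fderiv ℝ (gk k) x a := fun k a =>
    (((hgk_smooth k).continuous_fderiv (by norm_num)).clm_apply continuous_const)
  -- dominated convergence
  have T : ∀ (a b : Fin n → ℝ), Tendsto (fun k => ∫ x, fderiv ℝ f x a * fderiv ℝ (gk k) x b)
      atTop (𝓝 (∫ x, fderiv ℝ f x a * fderiv ℝ g x b)) := by
    intro a b
    apply tendsto_integral_of_dominated_convergence
      (bound := fun x => ‖fderiv ℝ f x a‖ * (3 * (M * ‖b‖)))
    · exact fun k => ((cfa a).mul (cgka k b)).aestronglyMeasurable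
    · exact (((cfa a).norm).integrable_of_hasCompactSupport
        ((hfs' a).norm)).mul_const _
    · intro k
      filter_upwards with x
      rw [norm_mul]
      exact mul_le_mul_of_nonneg_left (hbound k x b) (norm_nonneg _)
    · filter_upwards with x
      exact tendsto_const_nhds.mul (htend b x)
  have key : ∀ k, ∫ x, fderiv ℝ f x v * fderiv ℝ (gk k) x w
      = ∫ x, fderiv ℝ f x w * fderiv ℝ (gk k) x v := fun k =>
    korn_swap_smooth hf hfs (hgk_smooth k) (hgk_supp k) v w
  have T1 := T v w
  rw [show (fun k => ∫ x, fderiv ℝ f x v * fderiv ℝ (gk k) x w)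
      = fun k => ∫ x, fderiv ℝ f x w * fderiv ℝ (gk k) x v from funext key] at T1
  exact tendsto_nhds_unique T1 (T w v)

set_option maxHeartbeats 1000000 in
theorem korn_main (n : ℕ)
    (u : (Fin n → ℝ) → (Fin n → ℝ))
    (hu : ContDiff ℝ 1 u) (hsupp : HasCompactSupport u) :
    2 * ∫ x, ∑ i, ∑ j,
        ((1 / 2 : ℝ) * (fderiv ℝ u x (Pi.single i 1) j + fderiv ℝ u x (Pi.single j 1) i)) ^ 2
      = (∫ x, ∑ i, ∑ j, (fderiv ℝ u x (Pi.single i 1) j) ^ 2)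
        + ∫ x, (∑ i, fderiv ℝ u x (Pi.single i 1) i) ^ 2 := by
  have hud : Differentiable ℝ u := hu.differentiable (by norm_num)
  -- the components of u
  set c : Fin n → (Fin n → ℝ) → ℝ := fun j x => u x j with hc
  have hccd : ∀ j, ContDiff ℝ 1 (c j) := fun j =>
    (ContinuousLinearMap.proj (R := ℝ) (φ := fun _ : Fin n => ℝ) j).contDiff.comp hu
  have hcsupp : ∀ j, HasCompactSupport (c j) := by
    intro j
    have h : c j = (fun y : Fin n → ℝ => y j) ∘ u := rfl
    rw [h]
    exact hsupp.comp_left rfl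
  have hcd : ∀ j x (v : Fin n → ℝ), fderiv ℝ (c j) x v = fderiv ℝ u x v j := by
    intro j x v
    have h := ((ContinuousLinearMap.proj (R := ℝ) (φ := fun _ : Fin n => ℝ) j).hasFDerivAt.comp
      x (hud x).hasFDerivAt).fderiv
    have : fderiv ℝ (c j) x = (ContinuousLinearMap.proj (R := ℝ) (φ := fun _ : Fin n => ℝ)
        j).comp (fderiv ℝ u x) := h
    rw [this]; rfl
  -- continuity / support of entries
  have cu' : Continuous (fderiv ℝ u) := hu.continuous_fderiv (by norm_num)
  have ca : ∀ i j, Continuous fun x => fderiv ℝ u x (Pi.single i 1) j := fun i j =>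
    (continuous_apply j).comp (cu'.clm_apply continuous_const)
  have sa : ∀ i j, HasCompactSupport fun x => fderiv ℝ u x (Pi.single i 1) j := fun i j =>
    (hsupp.fderiv ℝ).comp_left
      (g := fun (L : (Fin n → ℝ) →L[ℝ] (Fin n → ℝ)) => L (Pi.single i 1) j) rfl
  -- integrability of all needed integrands
  have int_sym : ∀ i j : Fin n, Integrable (fun x =>
      ((1 / 2 : ℝ) * (fderiv ℝ u x (Pi.single i 1) j + fderiv ℝ u x (Pi.single j 1) i)) ^ 2) := by
    intro i j
    refine Continuous.integrable_of_hasCompactSupport (by fun_prop) ?_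
    exact ((sa i j).add (sa j i)).comp_left (g := fun y : ℝ => ((1 / 2 : ℝ) * y) ^ 2) (by norm_num)
  have int_sq : ∀ i j : Fin n, Integrable (fun x => (fderiv ℝ u x (Pi.single i 1) j) ^ 2) := by
    intro i j
    refine Continuous.integrable_of_hasCompactSupport (by fun_prop) ?_
    exact (sa i j).comp_left (g := fun y : ℝ => y ^ 2) (by norm_num)
  have int_prod : ∀ i j k l : Fin n, Integrable (fun x =>
      fderiv ℝ u x (Pi.single i 1) j * fderiv ℝ u x (Pi.single k 1) l) := by
    intro i j k l
    refine Continuous.integrable_of_hasCompactSupport ((ca i j).mul (ca k l)) ?_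
    exact HasCompactSupport.mul_right (sa i j)
  -- the key swap identity
  have key : ∀ i j : Fin n,
      ∫ x, fderiv ℝ u x (Pi.single i 1) j * fderiv ℝ u x (Pi.single j 1) i
        = ∫ x, fderiv ℝ u x (Pi.single i 1) i * fderiv ℝ u x (Pi.single j 1) j := by
    intro i j
    have h := korn_swap (hccd j) (hcsupp j) (hccd i) (hcsupp i)
      (Pi.single i 1) (Pi.single j 1)
    simp_rw [hcd] at h
    calc ∫ x, fderiv ℝ u x (Pi.single i 1) j * fderiv ℝ u x (Pi.single j 1) i = _ := h
      _ = ∫ x, fderiv ℝ u x (Pi.single i 1) i * fderiv ℝ u x (Pi.single j 1) j := by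
          simp_rw [mul_comm]
  -- per-term computation
  have step : ∀ i j : Fin n, 2 * ∫ x,
      ((1 / 2 : ℝ) * (fderiv ℝ u x (Pi.single i 1) j + fderiv ℝ u x (Pi.single j 1) i)) ^ 2
      = (1 / 2) * (∫ x, (fderiv ℝ u x (Pi.single i 1) j) ^ 2)
        + (1 / 2) * (∫ x, (fderiv ℝ u x (Pi.single j 1) i) ^ 2)
        + ∫ x, fderiv ℝ u x (Pi.single i 1) i * fderiv ℝ u x (Pi.single j 1) j := by
    intro i j
    rw [← integral_const_mul]
    have hpt : ∀ x : Fin n → ℝ, 2 *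
        ((1 / 2 : ℝ) * (fderiv ℝ u x (Pi.single i 1) j + fderiv ℝ u x (Pi.single j 1) i)) ^ 2
        = (1 / 2) * (fderiv ℝ u x (Pi.single i 1) j) ^ 2
          + (1 / 2) * (fderiv ℝ u x (Pi.single j 1) i) ^ 2
          + fderiv ℝ u x (Pi.single i 1) j * fderiv ℝ u x (Pi.single j 1) i := fun x => by ring
    simp_rw [hpt]
    have h1 : Integrable (fun x => (1 / 2 : ℝ) * (fderiv ℝ u x (Pi.single i 1) j) ^ 2
        + (1 / 2 : ℝ) * (fderiv ℝ u x (Pi.single j 1) i) ^ 2) :=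
      ((int_sq i j).const_mul _).add ((int_sq j i).const_mul _)
    calc ∫ x, ((1 / 2 : ℝ) * (fderiv ℝ u x (Pi.single i 1) j) ^ 2
          + (1 / 2 : ℝ) * (fderiv ℝ u x (Pi.single j 1) i) ^ 2
          + fderiv ℝ u x (Pi.single i 1) j * fderiv ℝ u x (Pi.single j 1) i)
        = (∫ x, ((1 / 2 : ℝ) * (fderiv ℝ u x (Pi.single i 1) j) ^ 2
            + (1 / 2 : ℝ) * (fderiv ℝ u x (Pi.single j 1) i) ^ 2))
          + ∫ x, fderiv ℝ u x (Pi.single i 1) j * fderiv ℝ u x (Pi.single j 1) i :=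
          integral_add h1 (int_prod i j j i)
      _ = ((∫ x, (1 / 2 : ℝ) * (fderiv ℝ u x (Pi.single i 1) j) ^ 2)
            + ∫ x, (1 / 2 : ℝ) * (fderiv ℝ u x (Pi.single j 1) i) ^ 2)
          + ∫ x, fderiv ℝ u x (Pi.single i 1) j * fderiv ℝ u x (Pi.single j 1) i := by
          rw [integral_add ((int_sq i j).const_mul _) ((int_sq j i).const_mul _)]
      _ = _ := by rw [integral_const_mul, integral_const_mul, key i j]
  -- swap integrals and sums
  have swap1 : (∫ x, ∑ i, ∑ j, ((1 / 2 : ℝ) *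
      (fderiv ℝ u x (Pi.single i 1) j + fderiv ℝ u x (Pi.single j 1) i)) ^ 2)
      = ∑ i, ∑ j, ∫ x, ((1 / 2 : ℝ) *
        (fderiv ℝ u x (Pi.single i 1) j + fderiv ℝ u x (Pi.single j 1) i)) ^ 2 := by
    rw [integral_finset_sum _ (fun i _ => integrable_finset_sum _ (fun j _ => int_sym i j))]
    exact Finset.sum_congr rfl fun i _ => integral_finset_sum _ (fun j _ => int_sym i j)
  have swap2 : (∫ x, ∑ i, ∑ j, (fderiv ℝ u x (Pi.single i 1) j) ^ 2)
      = ∑ i, ∑ j, ∫ x, (fderiv ℝ u x (Pi.single i 1) j) ^ 2 := by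
    rw [integral_finset_sum _ (fun i _ => integrable_finset_sum _ (fun j _ => int_sq i j))]
    exact Finset.sum_congr rfl fun i _ => integral_finset_sum _ (fun j _ => int_sq i j)
  have swap3 : (∫ x, (∑ i, fderiv ℝ u x (Pi.single i 1) i) ^ 2)
      = ∑ i, ∑ j, ∫ x, fderiv ℝ u x (Pi.single i 1) i * fderiv ℝ u x (Pi.single j 1) j := by
    have hpt : ∀ x : Fin n → ℝ, (∑ i, fderiv ℝ u x (Pi.single i 1) i) ^ 2
        = ∑ i, ∑ j, fderiv ℝ u x (Pi.single i 1) i * fderiv ℝ u x (Pi.single j 1) j := by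
      intro x
      rw [sq, Finset.sum_mul_sum]
    simp_rw [hpt]
    rw [integral_finset_sum _ (fun i _ => integrable_finset_sum _ (fun j _ => int_prod i i j j))]
    exact Finset.sum_congr rfl fun i _ => integral_finset_sum _ (fun j _ => int_prod i i j j)
  rw [swap1, swap2, swap3, Finset.mul_sum]
  simp_rw [Finset.mul_sum]
  calc ∑ i, ∑ j, 2 * ∫ x, ((1 / 2 : ℝ) *
        (fderiv ℝ u x (Pi.single i 1) j + fderiv ℝ u x (Pi.single j 1) i)) ^ 2
      = ∑ i, ∑ j, ((1 / 2) * (∫ x, (fderiv ℝ u x (Pi.single i 1) j) ^ 2)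
        + (1 / 2) * (∫ x, (fderiv ℝ u x (Pi.single j 1) i) ^ 2)
        + ∫ x, fderiv ℝ u x (Pi.single i 1) i * fderiv ℝ u x (Pi.single j 1) j) :=
        Finset.sum_congr rfl fun i _ => Finset.sum_congr rfl fun j _ => step i j
    _ = _ := by
        simp only [Finset.sum_add_distrib, ← Finset.mul_sum]
        rw [Finset.sum_comm (s := Finset.univ) (t := Finset.univ)
          (f := fun i j => ∫ x, (fderiv ℝ u x (Pi.single j 1) i) ^ 2)]
        ring

/-- Korn identity: for a `C¹` compactly supported vector field `u : ℝⁿ → ℝⁿ`,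
`2∫ |D u|² = ∫ |∇u|² + ∫ (div u)²` where `D u` is the symmetric gradient; in particular,
if `div u ≡ 0` then `∫ |∇u|² = 2∫ |D u|²`. -/
theorem korn_identity (n : ℕ) (hn : 1 ≤ n)
    (u : (Fin n → ℝ) → (Fin n → ℝ))
    (hu : ContDiff ℝ 1 u) (hsupp : HasCompactSupport u) :
    (2 * ∫ x, ∑ i, ∑ j,
        ((1 / 2 : ℝ) * (fderiv ℝ u x (Pi.single i 1) j + fderiv ℝ u x (Pi.single j 1) i)) ^ 2
      = (∫ x, ∑ i, ∑ j, (fderiv ℝ u x (Pi.single i 1) j) ^ 2)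
        + ∫ x, (∑ i, fderiv ℝ u x (Pi.single i 1) i) ^ 2) ∧
    ((∀ x, ∑ i, fderiv ℝ u x (Pi.single i 1) i = 0) →
      (∫ x, ∑ i, ∑ j, (fderiv ℝ u x (Pi.single i 1) j) ^ 2)
        = 2 * ∫ x, ∑ i, ∑ j,
            ((1 / 2 : ℝ) *
              (fderiv ℝ u x (Pi.single i 1) j + fderiv ℝ u x (Pi.single j 1) i)) ^ 2) := by
  have hmain := korn_main n u hu hsupp
  refine ⟨hmain, fun hdiv => ?_⟩
  have hz : (∫ x, (∑ i, fderiv ℝ u x (Pi.single i 1) i) ^ 2) = 0 := by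
    simp only [hdiv]
    simp
  rw [hz, add_zero] at hmain
  linarith
end
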